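/- Let P = {p_k : k ≥ 1} be a probability distribution on a countably infinite alphabet whose effective cardinality K = #{k : p_k > 0} is infinite. Then limsup_{n→∞} t_n ≥ e^{−1}; that is, e^{−1} is a uniform positive lower bound for limsup_{n→∞} t_n over all distributions with positive probabilities on infinitely many letters. -/

import Mathlib

open Filter Topology

/-- The tail index `t_n = n * ∑_k p_k (1 - p_k)^n`. -/
noncomputable def tailIndex (p : ℕ → ℝ) (n : ℕ) : ℝ :=
  (n : ℝ) * ∑' k, p k * (1 - p k) ^ n

lemma aux_tendsto :
    Tendsto (fun x : ℝ => Real.exp ((1/x + 1) * Real.log (1 - x))) (𝓝[>] (0:ℝ))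
      (𝓝 ((Real.exp 1)⁻¹)) := by
  have h1 : HasDerivAt (fun x : ℝ => Real.log (1 - x)) (-1) 0 := by
    have hc : HasDerivAt (fun x : ℝ => 1 - x) (-1) 0 := by
      exact (hasDerivAt_id' 0).const_sub 1
    have := (Real.hasDerivAt_log (by norm_num : (1:ℝ) - 0 ≠ 0)).comp 0 hc
    exact this.congr_deriv (by norm_num)
  have h2 : Tendsto (fun x : ℝ => Real.log (1 - x) / x) (𝓝[≠] (0:ℝ)) (𝓝 (-1)) := by
    have := hasDerivAt_iff_tendsto_slope.mp h1
    refine this.congr ?_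
    intro x
    simp [slope_def_field, div_eq_iff]
  have h3 : Tendsto (fun x : ℝ => Real.log (1 - x)) (𝓝[≠] (0:ℝ)) (𝓝 0) := by
    have hc : ContinuousAt (fun x : ℝ => Real.log (1 - x)) 0 := by
      apply (Real.continuousAt_log (by norm_num : (1:ℝ) - 0 ≠ 0)).comp
      fun_prop
    have := hc.tendsto
    simp only [sub_zero, Real.log_one] at this
    exact this.mono_left nhdsWithin_le_nhds
  have h4 : Tendsto (fun x : ℝ => (1/x + 1) * Real.log (1 - x)) (𝓝[≠] (0:ℝ)) (𝓝 (-1)) := by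
    have := h2.add h3
    rw [add_zero] at this
    refine this.congr' ?_
    filter_upwards [self_mem_nhdsWithin] with x hx
    have hx' : x ≠ 0 := hx
    field_simp
  have h5 := (Real.continuous_exp.tendsto (-1)).comp h4
  rw [Real.exp_neg] at h5
  exact h5.mono_left (nhdsWithin_mono _ (fun x hx => ne_of_gt hx))

theorem stmt1 (p : ℕ → ℝ) (hp : ∀ k, 0 ≤ p k) (hsum : ∑' k, p k = 1)
    (hK : {k | 0 < p k}.Infinite) :
    (((Real.exp 1)⁻¹ : ℝ) : EReal) ≤
      Filter.limsup (fun n : ℕ => ((tailIndex p n : ℝ) : EReal)) atTop := by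
  have hsummable : Summable p := by
    by_contra h
    rw [tsum_eq_zero_of_not_summable h] at hsum; norm_num at hsum
  have hple : ∀ k, p k ≤ 1 := fun k => hsum ▸ Summable.le_tsum hsummable k (fun j _ => hp j)
  by_contra hcon
  push_neg at hcon
  obtain ⟨r, hr1, hr2⟩ := EReal.exists_between_coe_real hcon
  have hrr : r < (Real.exp 1)⁻¹ := by exact_mod_cast hr2
  have hfreq : ∃ᶠ n in atTop, (r : EReal) ≤ ((tailIndex p n : ℝ) : EReal) := by
    rw [frequently_atTop]
    intro N
    obtain ⟨δ, hδpos, hδ⟩ : ∃ δ > 0, ∀ x ∈ Set.Ioo (0:ℝ) δ,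
        r < Real.exp ((1/x + 1) * Real.log (1 - x)) := by
      have h := aux_tendsto.eventually (eventually_gt_nhds hrr)
      exact (nhdsGT_basis (0:ℝ)).eventually_iff.mp h
    set δ' : ℝ := min (min δ (1/(N+1))) 1 with hδ'def
    have hδ'pos : 0 < δ' := by
      apply lt_min (lt_min hδpos _) one_pos
      positivity
    obtain ⟨k, hk1, hk2⟩ : ∃ k, 0 < p k ∧ p k < δ' := by
      have hev : ∀ᶠ k in atTop, p k < δ' :=
        (hsummable.tendsto_atTop_zero).eventually (eventually_lt_nhds hδ'pos)
      have hfr : ∃ᶠ k in atTop, 0 < p k := Nat.frequently_atTop_iff_infinite.2 hK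
      exact (hfr.and_eventually hev).exists
    set x := p k with hxdef
    have hx0 : 0 < x := hk1
    have hx1 : x < 1 := lt_of_lt_of_le hk2 (min_le_right _ _)
    have hxδ : x < δ := lt_of_lt_of_le hk2 (le_trans (min_le_left _ _) (min_le_left _ _))
    have hxN : x < 1/(N+1) := lt_of_lt_of_le hk2 (le_trans (min_le_left _ _) (min_le_right _ _))
    set n : ℕ := ⌈x⁻¹⌉₊ with hndef
    have hlen : x⁻¹ ≤ (n : ℝ) := Nat.le_ceil _
    have hnlt : (n : ℝ) < x⁻¹ + 1 := Nat.ceil_lt_add_one (by positivity)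
    refine ⟨n, ?_, ?_⟩
    · -- N ≤ n
      have hmul : x * ((N:ℝ)+1) < 1 := (lt_div_iff₀ (by positivity)).mp hxN
      have hinv : x * x⁻¹ = 1 := mul_inv_cancel₀ (ne_of_gt hx0)
      have : (N : ℝ) < (n : ℝ) := by nlinarith
      exact_mod_cast this.le
    · -- r ≤ tailIndex p n
      have h1x : (0:ℝ) < 1 - x := by linarith
      have hL : Real.log (1 - x) ≤ 0 := Real.log_nonpos (by linarith) (by linarith)
      have hsum2 : Summable (fun j => p j * (1 - p j) ^ n) := by
        apply hsummable.of_nonneg_of_le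
        · intro j
          exact mul_nonneg (hp j) (pow_nonneg (by linarith [hple j]) n)
        · intro j
          calc p j * (1 - p j) ^ n ≤ p j * 1 := by
                apply mul_le_mul_of_nonneg_left _ (hp j)
                exact pow_le_one₀ (by linarith [hple j]) (by linarith [hp j])
          _ = p j := mul_one _
      have hstep1 : x * (1 - x) ^ n ≤ ∑' j, p j * (1 - p j) ^ n :=
        Summable.le_tsum hsum2 k (fun j _ => mul_nonneg (hp j) (pow_nonneg (by linarith [hple j]) n))
      have hstep2 : ((n:ℝ) * x) * (1 - x) ^ n ≤ tailIndex p n := by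
        rw [tailIndex, mul_assoc]
        apply mul_le_mul_of_nonneg_left hstep1 (by positivity)
      have hexp : Real.exp ((1/x + 1) * Real.log (1 - x)) ≤ ((n:ℝ) * x) * (1 - x) ^ n := by
        have hpow : (1 - x) ^ n = Real.exp ((n:ℝ) * Real.log (1 - x)) := by
          rw [Real.exp_nat_mul, Real.exp_log h1x]
        have hmul : (1/x + 1) * Real.log (1 - x) ≤ (n:ℝ) * Real.log (1 - x) := by
          apply mul_le_mul_of_nonpos_right _ hL
          rw [one_div]; linarith
        calc Real.exp ((1/x + 1) * Real.log (1 - x))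
            ≤ Real.exp ((n:ℝ) * Real.log (1 - x)) := Real.exp_le_exp.2 hmul
          _ = (1 - x) ^ n := hpow.symm
          _ ≤ ((n:ℝ) * x) * (1 - x) ^ n := by
              apply le_mul_of_one_le_left (by positivity)
              calc (1:ℝ) = x * x⁻¹ := (mul_inv_cancel₀ (ne_of_gt hx0)).symm
                _ ≤ x * n := by nlinarith
                _ = (n:ℝ) * x := mul_comm _ _
      have hr3 : r < Real.exp ((1/x + 1) * Real.log (1 - x)) := hδ x ⟨hx0, hxδ⟩
      have : r ≤ tailIndex p n := le_trans (le_of_lt hr3) (le_trans hexp hstep2)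
      exact_mod_cast this
  have := le_limsup_of_frequently_le hfreq
  exact absurd this (not_le.2 hr1)
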